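/- Let R be a unique factorization domain and let T ∈ R[x,y] be an (n,r)-Brylawski polynomial with constant c ∈ R∖{0} (n ∈ ℕ, r ∈ ℤ). Suppose T = U·V with U, V ∈ R[x,y]. Then there exist integers m, s with 0 ≤ m ≤ n and nonzero elements a, b ∈ R with a·b = c such that U is an (n−m, r−s)-Brylawski polynomial with constant a and V is an (m, s)-Brylawski polynomial with constant b. -/

import Mathlib

open Polynomial

/-- Evaluation `U(Y/(Y−1), Y)` in the rational function field over the fraction field of `R`. -/
noncomputable def brylEval (R : Type*) [CommRing R] [IsDomain R]
    (U : Polynomial (Polynomial R)) : RatFunc (FractionRing R) :=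
  Polynomial.eval₂
    ((algebraMap (Polynomial (FractionRing R)) (RatFunc (FractionRing R))).comp
      (Polynomial.mapRingHom (algebraMap R (FractionRing R))))
    (RatFunc.X / (RatFunc.X - 1)) U

/-- `U ∈ (R[y])[x]` is an `(n,r)`-Brylawski polynomial with constant `c`, i.e.
`(Y−1)^r · U(Y/(Y−1), Y) = c·Y^n` holds in `K(Y)`, `K` the fraction field of `R`. -/
noncomputable def IsBrylawski (R : Type*) [CommRing R] [IsDomain R] (n : ℕ) (r : ℤ) (c : R)
    (U : Polynomial (Polynomial R)) : Prop :=
  (RatFunc.X - 1 : RatFunc (FractionRing R)) ^ r * brylEval R U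
    = RatFunc.C (algebraMap R (FractionRing R) c) * RatFunc.X ^ n

/-- `deg_y` of a bivariate polynomial in `(R[y])[x]`: the largest `j` such that some
coefficient `u_{i,j}` is nonzero. -/
noncomputable def degY {R : Type*} [CommRing R] (U : Polynomial (Polynomial R)) : ℕ :=
  U.support.sup fun i => (U.coeff i).natDegree
lemma prime_pow_mul_cancel {α : Type*} [CommMonoidWithZero α] [IsCancelMulZero α] {p : α} (hp : Prime p) :
    ∀ (a : ℕ) {b : ℕ} {u v : α}, ¬ p ∣ u → ¬ p ∣ v → p ^ a * u = p ^ b * v → a = b ∧ v = u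
  | 0, b, u, v, hu, hv, h => by
    cases b with
    | zero => exact ⟨rfl, by simpa using h.symm⟩
    | succ k =>
      exfalso; apply hu
      exact (hp.dvd_of_dvd_pow (n := 1) (by rw [pow_one]; exact ⟨p ^ k * v, by rw [pow_zero, one_mul] at h; rw [h, pow_succ', mul_assoc]⟩))
  | (a+1), b, u, v, hu, hv, h => by
    cases b with
    | zero =>
      exfalso; apply hv
      exact (hp.dvd_of_dvd_pow (n := 1) (by rw [pow_one]; exact ⟨p ^ a * u, by rw [pow_zero, one_mul] at h; rw [← h, pow_succ', mul_assoc]⟩))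
    | succ k =>
      have hcan : p ^ a * u = p ^ k * v := by
        apply mul_left_cancel₀ hp.ne_zero
        rw [← mul_assoc, ← mul_assoc, ← pow_succ', ← pow_succ']; exact h
      obtain ⟨h1, h2⟩ := prime_pow_mul_cancel hp a hu hv hcan
      exact ⟨by omega, h2⟩

lemma zpow_shift {F : Type*} [Field F] {w z y : F} (hw : w ≠ 0) {a b : ℕ} {s : ℤ}
    (hs : s = (a : ℤ) - b) (h : w ^ a * z = y * w ^ b) : w ^ s * z = y := by
  subst hs
  have h' : w ^ (a : ℤ) * z = y * w ^ (b : ℤ) := by rw [zpow_natCast, zpow_natCast]; exact h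
  have key : w ^ ((a : ℤ) - b) * z * w ^ (b : ℤ) = y * w ^ (b : ℤ) := by
    rw [mul_right_comm, ← zpow_add₀ hw, sub_add_cancel]; exact h'
  exact mul_right_cancel₀ (zpow_ne_zero _ hw) key

section BrylHom
variable (R : Type*) [CommRing R] [IsDomain R]

noncomputable def brylHom : Polynomial R →+* RatFunc (FractionRing R) :=
  (algebraMap (Polynomial (FractionRing R)) (RatFunc (FractionRing R))).comp
    (Polynomial.mapRingHom (algebraMap R (FractionRing R)))

lemma brylEval_eq (U : Polynomial (Polynomial R)) :
    brylEval R U = Polynomial.eval₂ (brylHom R) (RatFunc.X / (RatFunc.X - 1)) U := rfl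

lemma brylHom_X : brylHom R X = RatFunc.X := by
  simp [brylHom, RatFunc.algebraMap_X]

lemma brylHom_C (a : R) :
    brylHom R (C a) = RatFunc.C (algebraMap R (FractionRing R) a) := by
  simp [brylHom, RatFunc.algebraMap_C]

lemma brylHom_injective : Function.Injective (brylHom R) := by
  apply Function.Injective.comp (RatFunc.algebraMap_injective _)
  exact Polynomial.map_injective _ (IsFractionRing.injective R (FractionRing R))

lemma w_ne : (RatFunc.X - 1 : RatFunc (FractionRing R)) ≠ 0 := by
  have h : (RatFunc.X - 1 : RatFunc (FractionRing R)) = brylHom R (X - 1) := by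
    rw [map_sub, map_one, brylHom_X]
  rw [h, ← map_zero (brylHom R)]
  intro h'
  exact Polynomial.X_sub_C_ne_zero (R := R) 1 (by simpa using brylHom_injective R h')

noncomputable def rho (U : Polynomial (Polynomial R)) : Polynomial R :=
  ∑ i ∈ U.support, U.coeff i * X ^ i * (X - 1) ^ (U.natDegree - i)

lemma brylHom_rho (U : Polynomial (Polynomial R)) :
    brylHom R (rho R U) = (RatFunc.X - 1) ^ U.natDegree * brylEval R U := by
  rw [brylEval_eq, Polynomial.eval₂_eq_sum, Polynomial.sum_def, Finset.mul_sum, rho, map_sum]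
  apply Finset.sum_congr rfl
  intro i hi
  have hid : i ≤ U.natDegree :=
    Polynomial.le_natDegree_of_ne_zero (Polynomial.mem_support_iff.mp hi)
  rw [map_mul, map_mul, map_pow, map_pow, map_sub, map_one, brylHom_X]
  rw [show U.natDegree = (U.natDegree - i) + i from (Nat.sub_add_cancel hid).symm, pow_add,
    Nat.add_sub_cancel]
  rw [div_pow]
  have hw := w_ne R
  field_simp

end BrylHom

/-- Over a UFD, any factorization `T = U·V` of an (n,r)-Brylawski polynomial
with constant `c` splits as a product of an (n−m, r−s)-Brylawski polynomial with constant `a`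
and an (m, s)-Brylawski polynomial with constant `b`, where `0 ≤ m ≤ n` and `a·b = c`. -/
theorem brylawski_factorization (R : Type*) [CommRing R] [IsDomain R]
    [UniqueFactorizationMonoid R] (n : ℕ) (r : ℤ) (c : R) (hc : c ≠ 0)
    (T U V : Polynomial (Polynomial R)) (hT : IsBrylawski R n r c T) (hUV : T = U * V) :
    ∃ (m : ℕ) (s : ℤ) (a b : R), m ≤ n ∧ a ≠ 0 ∧ b ≠ 0 ∧ a * b = c ∧
      IsBrylawski R (n - m) (r - s) a U ∧ IsBrylawski R m s b V := by
  classical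
  unfold IsBrylawski at hT
  have hw : (RatFunc.X - 1 : RatFunc (FractionRing R)) ≠ 0 := w_ne R
  have hXne : (RatFunc.X : RatFunc (FractionRing R)) ≠ 0 := RatFunc.X_ne_zero
  have hcK : algebraMap R (FractionRing R) c ≠ 0 := fun h =>
    hc (IsFractionRing.injective R (FractionRing R) (by simpa using h))
  have hCc : (RatFunc.C (algebraMap R (FractionRing R) c)) ≠ 0 := by
    rw [← RatFunc.algebraMap_C]
    exact RatFunc.algebraMap_ne_zero (Polynomial.C_ne_zero.mpr hcK)
  have hTmul : brylEval R T = brylEval R U * brylEval R V := by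
    rw [hUV, brylEval_eq, brylEval_eq, brylEval_eq, Polynomial.eval₂_mul]
  have hRHSne : RatFunc.C (algebraMap R (FractionRing R) c) * RatFunc.X ^ n ≠ 0 :=
    mul_ne_zero hCc (pow_ne_zero _ hXne)
  have hprodne : brylEval R U * brylEval R V ≠ 0 := by
    intro h0
    rw [hTmul, h0, mul_zero] at hT
    exact hRHSne hT.symm
  have hεU : brylEval R U ≠ 0 := left_ne_zero_of_mul hprodne
  have hεV : brylEval R V ≠ 0 := right_ne_zero_of_mul hprodne
  set d := U.natDegree with hd
  set e := V.natDegree with he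
  set P := rho R U with hPdef
  set Q := rho R V with hQdef
  have hP : brylHom R P = (RatFunc.X - 1) ^ d * brylEval R U := brylHom_rho R U
  have hQ : brylHom R Q = (RatFunc.X - 1) ^ e * brylEval R V := brylHom_rho R V
  have hεT : brylEval R U * brylEval R V =
      (RatFunc.X - 1 : RatFunc (FractionRing R)) ^ (-r) *
        (RatFunc.C (algebraMap R (FractionRing R) c) * RatFunc.X ^ n) := by
    have h1 : (RatFunc.X - 1 : RatFunc (FractionRing R)) ^ (-r) *
        ((RatFunc.X - 1) ^ r * brylEval R T) = brylEval R T := by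
      rw [← mul_assoc, ← zpow_add₀ hw, neg_add_cancel, zpow_zero, one_mul]
    rw [← hTmul, ← h1, hT]
  have hPQ : brylHom R (P * Q) = RatFunc.C (algebraMap R (FractionRing R) c) * RatFunc.X ^ n *
      (RatFunc.X - 1) ^ ((d : ℤ) + e - r) := by
    rw [map_mul, hP, hQ, show ((d : ℤ) + e - r) = (d : ℤ) + ((e : ℤ) + (-r)) by ring,
      zpow_add₀ hw, zpow_add₀ hw, zpow_natCast, zpow_natCast]
    calc (RatFunc.X - 1 : RatFunc (FractionRing R)) ^ d * brylEval R U *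
          ((RatFunc.X - 1) ^ e * brylEval R V)
        = (RatFunc.X - 1) ^ d * (RatFunc.X - 1) ^ e * (brylEval R U * brylEval R V) := by ring
      _ = _ := by rw [hεT]; ring
  have ht : (0 : ℤ) ≤ (d : ℤ) + e - r := by
    by_contra hlt
    push_neg at hlt
    set k := (-((d : ℤ) + e - r)).toNat with hk
    have hkz : ((d : ℤ) + e - r) + k = 0 := by omega
    have hmap : brylHom R (P * Q * (X - 1) ^ k) = brylHom R (C c * X ^ n) := by
      rw [map_mul, map_pow, map_sub, map_one, brylHom_X, hPQ, map_mul, map_pow, brylHom_X,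
        brylHom_C, ← zpow_natCast (RatFunc.X - 1 : RatFunc (FractionRing R)) k, mul_assoc,
        ← zpow_add₀ hw, hkz, zpow_zero, mul_one]
    have heq := brylHom_injective R hmap
    have hev := congrArg (Polynomial.eval (1 : R)) heq
    simp only [Polynomial.eval_mul, Polynomial.eval_pow, Polynomial.eval_sub, Polynomial.eval_X,
      Polynomial.eval_one, Polynomial.eval_C, sub_self, one_pow, mul_one] at hev
    rw [zero_pow (by omega : k ≠ 0), mul_zero] at hev
    exact hc hev.symm
  set t : ℕ := ((d : ℤ) + e - r).toNat with htdef
  have htc : ((t : ℤ)) = (d : ℤ) + e - r := Int.toNat_of_nonneg ht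
  have hprodR : P * Q = C c * X ^ n * (X - 1) ^ t := by
    apply brylHom_injective R
    rw [hPQ, map_mul, map_mul, map_pow, map_pow, map_sub, map_one, brylHom_X, brylHom_C,
      ← htc, zpow_natCast]
  have hPne : P ≠ 0 := by
    intro h0
    rw [h0, map_zero] at hP
    exact mul_ne_zero (pow_ne_zero _ hw) hεU hP.symm
  have hQne : Q ≠ 0 := by
    intro h0
    rw [h0, map_zero] at hQ
    exact mul_ne_zero (pow_ne_zero _ hw) hεV hQ.symm
  have hprimeX : Prime (X : Polynomial R) := Polynomial.prime_X
  have hprimeW : Prime (X - 1 : Polynomial R) := by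
    simpa using Polynomial.prime_X_sub_C (1 : R)
  obtain ⟨i1, P1, hXP1, hPdec⟩ := WfDvdMonoid.max_power_factor hPne hprimeX.irreducible
  have hP1ne : P1 ≠ 0 := fun h => hPne (by rw [hPdec, h, mul_zero])
  obtain ⟨j1, P0, hWP0, hP1dec⟩ := WfDvdMonoid.max_power_factor hP1ne hprimeW.irreducible
  have hXP0 : ¬ (X : Polynomial R) ∣ P0 := fun h =>
    hXP1 (hP1dec ▸ Dvd.dvd.mul_left h _)
  have hP0ne : P0 ≠ 0 := fun h => hP1ne (by rw [hP1dec, h, mul_zero])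
  obtain ⟨i2, Q1, hXQ1, hQdec⟩ := WfDvdMonoid.max_power_factor hQne hprimeX.irreducible
  have hQ1ne : Q1 ≠ 0 := fun h => hQne (by rw [hQdec, h, mul_zero])
  obtain ⟨j2, Q0, hWQ0, hQ1dec⟩ := WfDvdMonoid.max_power_factor hQ1ne hprimeW.irreducible
  have hXQ0 : ¬ (X : Polynomial R) ∣ Q0 := fun h =>
    hXQ1 (hQ1dec ▸ Dvd.dvd.mul_left h _)
  have hQ0ne : Q0 ≠ 0 := fun h => hQ1ne (by rw [hQ1dec, h, mul_zero])
  have hXnW : ¬ (X : Polynomial R) ∣ (X - 1) := by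
    intro h
    have h1 : (X : Polynomial R) ∣ X - (X - 1) := dvd_sub dvd_rfl h
    simp only [sub_sub_cancel] at h1
    exact hprimeX.not_unit (isUnit_of_dvd_one h1)
  have hbig : (X : Polynomial R) ^ (i1 + i2) * ((X - 1) ^ (j1 + j2) * (P0 * Q0))
      = X ^ n * ((X - 1) ^ t * C c) := by
    rw [pow_add, pow_add]
    calc (X : Polynomial R) ^ i1 * X ^ i2 * ((X - 1) ^ j1 * (X - 1) ^ j2 * (P0 * Q0))
        = (X ^ i1 * ((X - 1) ^ j1 * P0)) * (X ^ i2 * ((X - 1) ^ j2 * Q0)) := by ring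
      _ = P * Q := by rw [← hP1dec, ← hPdec, ← hQ1dec, ← hQdec]
      _ = C c * X ^ n * (X - 1) ^ t := hprodR
      _ = _ := by ring
  have hnd1 : ¬ (X : Polynomial R) ∣ (X - 1) ^ (j1 + j2) * (P0 * Q0) := by
    intro h
    rcases hprimeX.dvd_mul.mp h with h | h
    · exact hXnW (hprimeX.dvd_of_dvd_pow h)
    · rcases hprimeX.dvd_mul.mp h with h | h
      exacts [hXP0 h, hXQ0 h]
  have hXnC : ¬ (X : Polynomial R) ∣ C c := by
    intro h
    rw [Polynomial.X_dvd_iff, Polynomial.coeff_C_zero] at h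
    exact hc h
  have hWnC : ¬ (X - 1 : Polynomial R) ∣ C c := by
    intro h
    rw [show (X - 1 : Polynomial R) = X - C 1 by rw [Polynomial.C_1],
      Polynomial.dvd_iff_isRoot] at h
    simp only [Polynomial.IsRoot, Polynomial.eval_C] at h
    exact hc h
  have hnd2 : ¬ (X : Polynomial R) ∣ (X - 1) ^ t * C c := by
    intro h
    rcases hprimeX.dvd_mul.mp h with h | h
    · exact hXnW (hprimeX.dvd_of_dvd_pow h)
    · exact hXnC h
  obtain ⟨hi, hrest⟩ := prime_pow_mul_cancel hprimeX _ hnd1 hnd2 hbig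
  have hndW2 : ¬ (X - 1 : Polynomial R) ∣ P0 * Q0 := by
    intro h
    rcases hprimeW.dvd_mul.mp h with h | h
    exacts [hWP0 h, hWQ0 h]
  obtain ⟨hj, hconst⟩ := prime_pow_mul_cancel hprimeW _ hWnC hndW2 hrest
  have hdeg0 : P0.natDegree + Q0.natDegree = 0 := by
    rw [← Polynomial.natDegree_mul hP0ne hQ0ne, hconst, Polynomial.natDegree_C]
  have hP0C : P0 = C (P0.coeff 0) := Polynomial.eq_C_of_natDegree_eq_zero (by omega)
  have hQ0C : Q0 = C (Q0.coeff 0) := Polynomial.eq_C_of_natDegree_eq_zero (by omega)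
  set a := P0.coeff 0 with ha
  set b := Q0.coeff 0 with hb
  have hane : a ≠ 0 := fun h => hP0ne (by rw [hP0C, h, map_zero])
  have hbne : b ≠ 0 := fun h => hQ0ne (by rw [hQ0C, h, map_zero])
  have habc : a * b = c := by
    have hcc : C (a * b) = C c := by rw [map_mul, ← hP0C, ← hQ0C, hconst]
    exact Polynomial.C_injective hcc
  refine ⟨i2, (e : ℤ) - j2, a, b, by omega, hane, hbne, habc, ?_, ?_⟩
  · unfold IsBrylawski
    have hi1 : n - i2 = i1 := by omega
    rw [hi1]
    have hPval : (RatFunc.X - 1 : RatFunc (FractionRing R)) ^ d * brylEval R U =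
        (RatFunc.C (algebraMap R (FractionRing R) a) * RatFunc.X ^ i1) *
          (RatFunc.X - 1) ^ j1 := by
      rw [← hP, hPdec, hP1dec, hP0C, map_mul, map_mul, map_pow, map_pow, map_sub, map_one,
        brylHom_X, brylHom_C]
      ring
    apply zpow_shift hw ?_ hPval
    have hjt : (j1 : ℤ) + j2 = (d : ℤ) + e - r := by
      rw [← htc]; exact_mod_cast hj.symm
    omega
  · unfold IsBrylawski
    have hQval : (RatFunc.X - 1 : RatFunc (FractionRing R)) ^ e * brylEval R V =
        (RatFunc.C (algebraMap R (FractionRing R) b) * RatFunc.X ^ i2) *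
          (RatFunc.X - 1) ^ j2 := by
      rw [← hQ, hQdec, hQ1dec, hQ0C, map_mul, map_mul, map_pow, map_pow, map_sub, map_one,
        brylHom_X, brylHom_C]
      ring
    exact zpow_shift hw rfl hQval
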